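/- Let A ∈ ℂ^{m×p} (m ≥ p) be full rank with polar factor U = P(A), and let Ũ ∈ ℂ^{m×p} have orthonormal columns. Then ‖(I − ŨŨ*)A‖_F ≤ 2‖U − Ũ‖_F · σ₁(A). -/

import Mathlib

open Matrix
open scoped ComplexOrder

/-- Frobenius norm of a complex matrix. -/
noncomputable def frob {m p : ℕ} (A : Matrix (Fin m) (Fin p) ℂ) : ℝ :=
  Real.sqrt (∑ i, ∑ j, ‖A i j‖ ^ 2)

/-- Euclidean norm of a complex vector. -/
noncomputable def vnorm {p : ℕ} (x : Fin p → ℂ) : ℝ :=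
  Real.sqrt (∑ i, ‖x i‖ ^ 2)

/-- The largest singular value of a matrix, characterized as the supremum of `‖A x‖`
over unit vectors `x`. -/
noncomputable def sigmaMax {m p : ℕ} (A : Matrix (Fin m) (Fin p) ℂ) : ℝ :=
  sSup {r : ℝ | ∃ x : Fin p → ℂ, vnorm x = 1 ∧ r = vnorm (A.mulVec x)}

lemma vnormSqRe {n : ℕ} (x : Fin n → ℂ) : (∑ i, ‖x i‖^2 : ℝ) = (star x ⬝ᵥ x).re := by
  simp [dotProduct, Pi.star_apply, Complex.re_sum, ← Complex.normSq_apply,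
    Complex.sq_norm, Complex.normSq_apply]

lemma isoU {m p : ℕ} {U : Matrix (Fin m) (Fin p) ℂ} (hU : Uᴴ * U = 1) (x : Fin p → ℂ) :
    (∑ i, ‖(U.mulVec x) i‖^2 : ℝ) = ∑ j, ‖x j‖^2 := by
  rw [vnormSqRe, vnormSqRe, star_mulVec, dotProduct_mulVec, vecMul_vecMul, hU, vecMul_one]

lemma projContract {m p : ℕ} {U' : Matrix (Fin m) (Fin p) ℂ} (hU' : U'ᴴ * U' = 1)
    (x : Fin m → ℂ) :
    (∑ i, ‖(((1 : Matrix (Fin m) (Fin m) ℂ) - U' * U'ᴴ) *ᵥ x) i‖^2 : ℝ) ≤ ∑ i, ‖x i‖^2 := by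
  set P : Matrix (Fin m) (Fin m) ℂ := 1 - U' * U'ᴴ with hPdef
  have hPH : Pᴴ = P := by
    simp [hPdef, conjTranspose_sub, conjTranspose_mul]
  have hPP : P * P = P := by
    simp only [hPdef, sub_mul, mul_sub, one_mul, mul_one, Matrix.mul_assoc]
    rw [show U' * (U'ᴴ * (U' * U'ᴴ)) = U' * ((U'ᴴ * U') * U'ᴴ) by
      simp [Matrix.mul_assoc]]
    rw [hU']
    simp
  have key : star (P *ᵥ x) ⬝ᵥ (P *ᵥ x) = star x ⬝ᵥ (P *ᵥ x) := by
    rw [star_mulVec, hPH, dotProduct_mulVec, vecMul_vecMul, hPP, ← dotProduct_mulVec]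
  have split : star x ⬝ᵥ (P *ᵥ x) =
      star x ⬝ᵥ x - star (U'ᴴ *ᵥ x) ⬝ᵥ (U'ᴴ *ᵥ x) := by
    rw [star_mulVec, conjTranspose_conjTranspose, hPdef, sub_mulVec, one_mulVec,
      dotProduct_sub, ← mulVec_mulVec, dotProduct_mulVec]
  rw [vnormSqRe, vnormSqRe, key, split]
  have := vnormSqRe (U'ᴴ *ᵥ x)
  simp only [Complex.sub_re]
  nlinarith [Finset.sum_nonneg (fun i (_ : i ∈ Finset.univ) =>
    sq_nonneg ‖(U'ᴴ *ᵥ x) i‖)]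

lemma vnorm_nonneg {p : ℕ} (x : Fin p → ℂ) : 0 ≤ vnorm x := Real.sqrt_nonneg _

lemma vnorm_sq {p : ℕ} (x : Fin p → ℂ) : vnorm x ^ 2 = ∑ i, ‖x i‖ ^ 2 := by
  rw [vnorm, Real.sq_sqrt]
  exact Finset.sum_nonneg fun i _ => sq_nonneg _

lemma vnorm_smul {p : ℕ} (c : ℂ) (x : Fin p → ℂ) : vnorm (c • x) = ‖c‖ * vnorm x := by
  rw [vnorm, vnorm, ← Real.sqrt_sq (norm_nonneg c), ← Real.sqrt_mul (sq_nonneg _),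
    Finset.mul_sum]
  congr 1
  exact Finset.sum_congr rfl fun i _ => by simp [norm_mul, mul_pow]

lemma memBound {m p : ℕ} (A : Matrix (Fin m) (Fin p) ℂ) (x : Fin p → ℂ)
    (hx : vnorm x = 1) : vnorm (A.mulVec x) ≤ frob A := by
  rw [vnorm, frob]
  apply Real.sqrt_le_sqrt
  calc ∑ i, ‖A.mulVec x i‖ ^ 2
      ≤ ∑ i, (∑ j, ‖A i j‖ * ‖x j‖) ^ 2 := by
        apply Finset.sum_le_sum; intro i _
        apply pow_le_pow_left₀ (norm_nonneg _)
        have hrfl : A.mulVec x i = ∑ j, A i j * x j := rfl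
        calc ‖A.mulVec x i‖ ≤ ∑ j, ‖A i j * x j‖ := by
              rw [hrfl]; exact norm_sum_le _ _
        _ = ∑ j, ‖A i j‖ * ‖x j‖ := by simp [norm_mul]
    _ ≤ ∑ i, (∑ j, ‖A i j‖ ^ 2) * (∑ j, ‖x j‖ ^ 2) := by
        apply Finset.sum_le_sum; intro i _
        exact Finset.sum_mul_sq_le_sq_mul_sq _ _ _
    _ = ∑ i, ∑ j, ‖A i j‖ ^ 2 := by
        have h1 : (∑ j, ‖x j‖ ^ 2 : ℝ) = 1 := by
          rw [← vnorm_sq, hx]; norm_num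
        simp only [h1, mul_one]

lemma sigmaMax_nonneg {m p : ℕ} (A : Matrix (Fin m) (Fin p) ℂ) : 0 ≤ sigmaMax A :=
  Real.sSup_nonneg (by rintro r ⟨x, _, rfl⟩; exact vnorm_nonneg _)

lemma sigmaBound {m p : ℕ} (A : Matrix (Fin m) (Fin p) ℂ) (x : Fin p → ℂ) :
    vnorm (A.mulVec x) ≤ sigmaMax A * vnorm x := by
  rcases eq_or_ne (vnorm x) 0 with h0 | h0
  · have hx0 : x = 0 := by
      have := vnorm_sq x
      rw [h0] at this
      funext i
      have hle : ‖x i‖ ^ 2 ≤ 0 := by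
        rw [show (0:ℝ) = ∑ i, ‖x i‖^2 by linarith [this]]
        exact Finset.single_le_sum (fun j _ => sq_nonneg ‖x j‖) (Finset.mem_univ i)
      have : ‖x i‖ = 0 := by nlinarith [norm_nonneg (x i)]
      simpa using this
    simp [hx0, h0, vnorm, Matrix.mulVec_zero]
  · set c : ℝ := vnorm x with hc
    have hcpos : 0 < c := lt_of_le_of_ne (vnorm_nonneg x) (Ne.symm h0)
    set y : Fin p → ℂ := ((c : ℂ)⁻¹) • x with hy
    have hyn : vnorm y = 1 := by
      rw [hy, vnorm_smul]
      simp [abs_of_pos hcpos]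
      field_simp
      exact hc.symm
    have hmem : vnorm (A.mulVec y) ∈
        {r : ℝ | ∃ z : Fin p → ℂ, vnorm z = 1 ∧ r = vnorm (A.mulVec z)} := ⟨y, hyn, rfl⟩
    have hbdd : BddAbove {r : ℝ | ∃ z : Fin p → ℂ, vnorm z = 1 ∧ r = vnorm (A.mulVec z)} :=
      ⟨frob A, by rintro r ⟨z, hz, rfl⟩; exact memBound A z hz⟩
    have hle : vnorm (A.mulVec y) ≤ sigmaMax A := le_csSup hbdd hmem
    have hAy : A.mulVec y = ((c : ℂ)⁻¹) • A.mulVec x := by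
      rw [hy, Matrix.mulVec_smul]
    have : vnorm (A.mulVec x) = c * vnorm (A.mulVec y) := by
      rw [hAy, vnorm_smul]
      simp [abs_of_pos hcpos]
      field_simp
    rw [this, mul_comm (sigmaMax A) c]
    exact mul_le_mul_of_nonneg_left hle hcpos.le

theorem range_discrepancy_bound {m p : ℕ} (hmp : p ≤ m)
    (A U U' : Matrix (Fin m) (Fin p) ℂ) (H : Matrix (Fin p) (Fin p) ℂ)
    (hA : A.rank = p)
    (hAUH : A = U * H) (hU : Uᴴ * U = 1) (hH : H.PosDef)
    (hU' : U'ᴴ * U' = 1) :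
    frob ((1 - U' * U'ᴴ) * A) ≤ 2 * frob (U - U') * sigmaMax A := by
  set σ : ℝ := sigmaMax A with hσ
  have hσ0 : 0 ≤ σ := sigmaMax_nonneg A
  set E : Matrix (Fin m) (Fin p) ℂ := U - U' with hE
  have hE0 : 0 ≤ frob E := Real.sqrt_nonneg _
  -- σ bounds H
  have hHσ : ∀ x : Fin p → ℂ, vnorm (H.mulVec x) ≤ σ * vnorm x := by
    intro x
    have h1 : vnorm (A.mulVec x) = vnorm (H.mulVec x) := by
      rw [vnorm, vnorm, hAUH, ← Matrix.mulVec_mulVec, isoU hU]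
    rw [← h1]
    exact sigmaBound A x
  have hHerm : Hᴴ = H := hH.isHermitian
  -- matrix identity
  have h0 : ((1 : Matrix (Fin m) (Fin m) ℂ) - U' * U'ᴴ) * U' = 0 := by
    rw [Matrix.sub_mul, Matrix.one_mul, Matrix.mul_assoc, hU', Matrix.mul_one, sub_self]
  have hEq : ((1 : Matrix (Fin m) (Fin m) ℂ) - U' * U'ᴴ) * A
      = ((1 : Matrix (Fin m) (Fin m) ℂ) - U' * U'ᴴ) * (E * H) := by
    rw [hE, Matrix.sub_mul U U' H, Matrix.mul_sub, ← hAUH, ← Matrix.mul_assoc, h0, Matrix.zero_mul, sub_zero]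
  -- step 1 : projection contraction, columnwise
  have hstep1 : (∑ i, ∑ j, ‖(((1 : Matrix (Fin m) (Fin m) ℂ) - U' * U'ᴴ) * (E * H)) i j‖^2 : ℝ)
      ≤ ∑ i, ∑ j, ‖(E * H) i j‖^2 := by
    rw [show (∑ i, ∑ j, ‖(((1 : Matrix (Fin m) (Fin m) ℂ) - U' * U'ᴴ) * (E * H)) i j‖^2 : ℝ)
        = ∑ j, ∑ i, ‖(((1 : Matrix (Fin m) (Fin m) ℂ) - U' * U'ᴴ) * (E * H)) i j‖^2 from
        Finset.sum_comm,
      show (∑ i, ∑ j, ‖(E * H) i j‖^2 : ℝ) = ∑ j, ∑ i, ‖(E * H) i j‖^2 from Finset.sum_comm]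
    apply Finset.sum_le_sum
    intro j _
    have hcol : ∀ i, (((1 : Matrix (Fin m) (Fin m) ℂ) - U' * U'ᴴ) * (E * H)) i j
        = (((1 : Matrix (Fin m) (Fin m) ℂ) - U' * U'ᴴ) *ᵥ (fun k => (E * H) k j)) i :=
      fun i => rfl
    simp only [hcol]
    exact projContract hU' _
  -- step 2 : multiplying by H on the right, rowwise
  have hstep2 : (∑ i, ∑ j, ‖(E * H) i j‖^2 : ℝ) ≤ σ^2 * ∑ i, ∑ j, ‖E i j‖^2 := by
    rw [Finset.mul_sum]
    apply Finset.sum_le_sum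
    intro i _
    have hrow : ∀ j, (E * H) i j = star ((H.mulVec (star (E i))) j) := by
      intro j
      have : (H.mulVec (star (E i))) j = ∑ k, H j k * star (E i k) := rfl
      rw [this]
      have hmul : (E * H) i j = ∑ k, E i k * H k j := rfl
      rw [hmul, star_sum]
      apply Finset.sum_congr rfl
      intro k _
      have hHkj : H k j = star (H j k) := by
        conv_lhs => rw [← hHerm]
        rfl
      rw [hHkj]
      simp [mul_comm]
    have h1 : (∑ j, ‖(E * H) i j‖^2 : ℝ) = ∑ j, ‖(H.mulVec (star (E i))) j‖^2 := by
      apply Finset.sum_congr rfl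
      intro j _
      rw [hrow j]
      simp
    rw [h1]
    have h2 := hHσ (star (E i))
    have h3 : vnorm (star (E i)) = vnorm (E i) := by
      rw [vnorm, vnorm]
      congr 1
      apply Finset.sum_congr rfl
      intro j _
      simp
    have h4 : (∑ j, ‖(H.mulVec (star (E i))) j‖^2 : ℝ) = vnorm (H.mulVec (star (E i))) ^ 2 :=
      (vnorm_sq _).symm
    have h5 : (∑ j, ‖E i j‖^2 : ℝ) = vnorm (E i) ^ 2 := (vnorm_sq _).symm
    rw [h4, h5]
    rw [h3] at h2
    have hv0 : 0 ≤ vnorm (H.mulVec (star (E i))) := vnorm_nonneg _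
    nlinarith [vnorm_nonneg (E i)]
  -- assemble
  have hfrob : frob (((1 : Matrix (Fin m) (Fin m) ℂ) - U' * U'ᴴ) * A) ≤ σ * frob E := by
    rw [hEq, frob]
    have : σ * frob E = Real.sqrt (σ^2 * ∑ i, ∑ j, ‖E i j‖^2) := by
      rw [Real.sqrt_mul (sq_nonneg σ), Real.sqrt_sq hσ0, frob]
    rw [this]
    exact Real.sqrt_le_sqrt (le_trans hstep1 hstep2)
  calc frob ((1 - U' * U'ᴴ) * A) ≤ σ * frob E := hfrob
    _ ≤ 2 * frob E * σ := by nlinarith
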